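/- Fix an integer n ≥ 1 and a real λ > 0. The function f(z) = e^{(z − 1/z)/(n+2)} − λ^{1/(n+2)} z on (0, ∞) has at most four zeros. -/

import Mathlib

set_option maxHeartbeats 1000000

theorem stmt_6 (n : ℕ) (hn : 1 ≤ n) (lam : ℝ) (hlam : 0 < lam) :
    letI f : ℝ → ℝ := fun z =>
      Real.exp ((z - 1 / z) / (n + 2)) - lam ^ ((1 : ℝ) / (n + 2)) * z
    {z : ℝ | 0 < z ∧ f z = 0}.Finite ∧ {z : ℝ | 0 < z ∧ f z = 0}.ncard ≤ 4 := by
  set f : ℝ → ℝ := fun z =>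
      Real.exp ((z - 1 / z) / (n + 2)) - lam ^ ((1 : ℝ) / (n + 2)) * z with hfdef
  simp only [hfdef]
  set c : ℝ := lam ^ ((1 : ℝ) / (n + 2)) with hcdef
  have hc : 0 < c := Real.rpow_pos_of_pos hlam _
  set N : ℝ := (n : ℝ) + 2 with hNdef
  have hn' : (1:ℝ) ≤ (n:ℝ) := by exact_mod_cast hn
  have hN3 : (3:ℝ) ≤ N := by simp only [hNdef]; linarith
  have hNpos : (0:ℝ) < N := by linarith
  set s : ℝ := Real.sqrt (N^2 - 4) with hsdef
  have hs2 : s^2 = N^2 - 4 := Real.sq_sqrt (by nlinarith)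
  have hsnn : 0 ≤ s := Real.sqrt_nonneg _
  set r1 : ℝ := (N - s)/2 with hr1def
  set r2 : ℝ := (N + s)/2 with hr2def
  have hsltN : s < N := by nlinarith
  have hr1pos : 0 < r1 := by simp only [hr1def]; linarith
  have hr12 : r1 ≤ r2 := by simp only [hr1def, hr2def]; linarith
  have hfact : ∀ z : ℝ, z^2 - N*z + 1 = (z - r1)*(z - r2) := by
    intro z; simp only [hr1def, hr2def]; nlinarith [hs2]
  set g : ℝ → ℝ := fun z => (z - z⁻¹)/N - Real.log z - Real.log c with hgdef
  have hfg : ∀ z : ℝ, 0 < z → (f z = 0 ↔ g z = 0) := by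
    intro z hz
    have hcz : 0 < c * z := mul_pos hc hz
    have h1 : f z = 0 ↔ Real.exp ((z - z⁻¹)/N) = c * z := by
      simp only [hfdef, hNdef, one_div, sub_eq_zero]
    rw [h1, ← Real.exp_log hcz, Real.exp_eq_exp, Real.log_mul hc.ne' hz.ne']
    simp only [hgdef, sub_eq_zero]
    constructor
    · intro h; linarith
    · intro h; linarith
  have hderiv : ∀ z : ℝ, 0 < z →
      HasDerivAt g ((z^2 - N*z + 1)/(N*z^2)) z := by
    intro z hz
    have h1 : HasDerivAt (fun z : ℝ => (z - z⁻¹)/N) ((1 - -(z^2)⁻¹)/N) z :=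
      ((hasDerivAt_id z).sub (hasDerivAt_inv hz.ne')).div_const N
    have h2 := (h1.sub (Real.hasDerivAt_log hz.ne')).sub_const (Real.log c)
    refine h2.congr_deriv ?_
    field_simp
    ring
  have hcont : ∀ z : ℝ, 0 < z → ContinuousWithinAt g (Set.Ioi 0) z :=
    fun z hz => (hderiv z hz).continuousAt.continuousWithinAt
  -- strict monotonicity on three intervals
  have key : ∀ (I : Set ℝ), Convex ℝ I → I ⊆ Set.Ioi 0 →
      ((∀ x ∈ interior I, 0 < (x^2 - N*x + 1)/(N*x^2)) → StrictMonoOn g I) ∧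
      ((∀ x ∈ interior I, (x^2 - N*x + 1)/(N*x^2) < 0) → StrictAntiOn g I) := by
    intro I hI hI0
    have hcI : ContinuousOn g I := fun x hx => ((hcont x (hI0 hx)).mono hI0)
    have hdI : ∀ x ∈ interior I, deriv g x = (x^2 - N*x + 1)/(N*x^2) := by
      intro x hx
      exact (hderiv x (hI0 (interior_subset hx))).deriv
    constructor
    · intro hpos
      apply strictMonoOn_of_deriv_pos hI hcI
      intro x hx; rw [hdI x hx]; exact hpos x hx
    · intro hneg
      apply strictAntiOn_of_deriv_neg hI hcI
      intro x hx; rw [hdI x hx]; exact hneg x hx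
  have hmono1 : StrictMonoOn g (Set.Ioc 0 r1) := by
    refine (key _ (convex_Ioc _ _) (fun x hx => hx.1)).1 ?_
    intro x hx
    rw [interior_Ioc] at hx
    have hx0 : 0 < x := hx.1
    apply div_pos
    · rw [hfact]
      have : x < r2 := lt_of_lt_of_le hx.2 hr12
      nlinarith [hx.1, hx.2]
    · positivity
  have hanti : StrictAntiOn g (Set.Icc r1 r2) := by
    refine (key _ (convex_Icc _ _) (fun x hx => lt_of_lt_of_le hr1pos hx.1)).2 ?_
    intro x hx
    rw [interior_Icc] at hx
    have hx0 : 0 < x := lt_trans hr1pos hx.1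
    apply div_neg_of_neg_of_pos
    · rw [hfact]; nlinarith [hx.1, hx.2]
    · positivity
  have hmono2 : StrictMonoOn g (Set.Ici r2) := by
    refine (key _ (convex_Ici _) (fun x hx => lt_of_lt_of_le (lt_of_lt_of_le hr1pos hr12) hx)).1 ?_
    intro x hx
    rw [interior_Ici] at hx
    have hx0 : 0 < x := lt_trans (lt_of_lt_of_le hr1pos hr12) hx
    apply div_pos
    · rw [hfact]
      have h2 : r2 < x := hx
      have h1 : r1 < x := lt_of_le_of_lt hr12 h2
      nlinarith
    · positivity
  set S : Set ℝ := {z : ℝ | 0 < z ∧ f z = 0} with hSdef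
  have hzero : ∀ z ∈ S, g z = 0 := fun z hz => (hfg z hz.1).mp hz.2
  have hsub : ∀ (I : Set ℝ), (∀ x y, x ∈ I → y ∈ I → g x = g y → x = y) →
      Set.Subsingleton (S ∩ I) := by
    rintro I hinj x ⟨hxS, hxI⟩ y ⟨hyS, hyI⟩
    exact hinj x y hxI hyI (by rw [hzero x hxS, hzero y hyS])
  have h1 : Set.Subsingleton (S ∩ Set.Ioc 0 r1) :=
    hsub _ (fun x y hx hy h => hmono1.injOn hx hy h)
  have h2 : Set.Subsingleton (S ∩ Set.Icc r1 r2) :=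
    hsub _ (fun x y hx hy h => hanti.injOn hx hy h)
  have h3 : Set.Subsingleton (S ∩ Set.Ici r2) :=
    hsub _ (fun x y hx hy h => hmono2.injOn hx hy h)
  have hcover : S = (S ∩ Set.Ioc 0 r1) ∪ (S ∩ Set.Icc r1 r2) ∪ (S ∩ Set.Ici r2) := by
    ext z
    simp only [Set.mem_union, Set.mem_inter_iff, Set.mem_Ioc, Set.mem_Icc, Set.mem_Ici]
    constructor
    · intro hz
      rcases le_or_gt z r1 with h | h
      · exact Or.inl (Or.inl ⟨hz, hz.1, h⟩)
      · rcases le_or_gt z r2 with h' | h'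
        · exact Or.inl (Or.inr ⟨hz, le_of_lt h, h'⟩)
        · exact Or.inr ⟨hz, le_of_lt h'⟩
    · rintro ((⟨h, _⟩ | ⟨h, _⟩) | ⟨h, _⟩) <;> exact h
  have hf1 := h1.finite
  have hf2 := h2.finite
  have hf3 := h3.finite
  have hfin : S.Finite := by
    rw [hcover]; exact ((hf1.union hf2).union hf3)
  refine ⟨hfin, ?_⟩
  have hn1 : (S ∩ Set.Ioc 0 r1).ncard ≤ 1 := (Set.ncard_le_one_iff hf1).mpr (fun ha hb => h1 ha hb)
  have hn2 : (S ∩ Set.Icc r1 r2).ncard ≤ 1 := (Set.ncard_le_one_iff hf2).mpr (fun ha hb => h2 ha hb)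
  have hn3 : (S ∩ Set.Ici r2).ncard ≤ 1 := (Set.ncard_le_one_iff hf3).mpr (fun ha hb => h3 ha hb)
  calc S.ncard = ((S ∩ Set.Ioc 0 r1) ∪ (S ∩ Set.Icc r1 r2) ∪ (S ∩ Set.Ici r2)).ncard := by
        rw [← hcover]
    _ ≤ ((S ∩ Set.Ioc 0 r1) ∪ (S ∩ Set.Icc r1 r2)).ncard + (S ∩ Set.Ici r2).ncard :=
        Set.ncard_union_le _ _
    _ ≤ (S ∩ Set.Ioc 0 r1).ncard + (S ∩ Set.Icc r1 r2).ncard + (S ∩ Set.Ici r2).ncard := by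
        have := Set.ncard_union_le (S ∩ Set.Ioc 0 r1) (S ∩ Set.Icc r1 r2)
        omega
    _ ≤ 4 := by omega
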